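/- Let p be a prime and k an algebraically closed field of characteristic p, and let σ denote the Frobenius ring endomorphism of the ring of Witt vectors W(k) (which is bijective since k is perfect). Then for every unit w ∈ W(k)ˣ there exists a unit v ∈ W(k)ˣ such that σ⁶(v) = w·v. Equivalently, for every unit u ∈ W(k)ˣ there exists a unit ũ ∈ W(k)ˣ with σ⁻⁶(ũ)·u = ũ. -/

import Mathlib

noncomputable section

namespace WittSixLang

open WittVector Polynomial

variable (p : ℕ) [hp : Fact p.Prime] {k : Type*} [Field k] [CharP k p] [IsAlgClosed k]

local notation "𝕎" => WittVector p

theorem coeff_frobenius_iterate (m : ℕ) (x : 𝕎 k) (n : ℕ) :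
    ((⇑(WittVector.frobenius : 𝕎 k →+* 𝕎 k))^[m] x).coeff n = x.coeff n ^ p ^ m := by
  induction m generalizing x with
  | zero => simp
  | succ m ih =>
      rw [Function.iterate_succ_apply, ih, WittVector.coeff_frobenius_charP,
        ← pow_mul, ← pow_succ']

theorem base_exists (w : 𝕎 k) : ∃ x : k, x ^ (p ^ 6 - 1) = w.coeff 0 :=
  IsAlgClosed.exists_pow_nat_eq _ <|
    Nat.sub_pos_of_lt (Nat.one_lt_pow (by norm_num) hp.out.one_lt)

/-- base coefficient -/
def sol0 (w : 𝕎 k) : k := Classical.choose (base_exists p w)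

theorem sol0_spec (w : 𝕎 k) : sol0 p w ^ (p ^ 6 - 1) = w.coeff 0 :=
  Classical.choose_spec (base_exists p w)

theorem sol0_ne_zero {w : 𝕎 k} (hw : w.coeff 0 ≠ 0) : sol0 p w ≠ 0 := by
  intro h
  apply hw
  rw [← sol0_spec p w, h, zero_pow]
  exact Nat.sub_ne_zero_of_lt (Nat.one_lt_pow (by norm_num) hp.out.one_lt)

theorem sol0_spec' {w : 𝕎 k} (hw : w.coeff 0 ≠ 0) :
    sol0 p w ^ p ^ 6 = w.coeff 0 * sol0 p w := by
  have h1 : (1 : ℕ) ≤ p ^ 6 := Nat.one_le_pow _ _ hp.out.pos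
  calc sol0 p w ^ p ^ 6 = sol0 p w ^ (p ^ 6 - 1) * sol0 p w := by
        rw [← pow_succ, Nat.sub_add_cancel h1]
    _ = w.coeff 0 * sol0 p w := by rw [sol0_spec]

/-- polynomial for the successor step -/
def succPoly (n : ℕ) (w : 𝕎 k) (bs : Fin (n + 1) → k) : Polynomial k :=
  X ^ p ^ 6 - X * C (w.coeff 0 ^ p ^ (n + 1)) -
    C (w.coeff (n + 1) * bs 0 ^ p ^ (n + 1) +
        nthRemainder p n (truncateFun (n + 1) w) bs)

theorem succPoly_degree (n : ℕ) (w : 𝕎 k) (bs : Fin (n + 1) → k) :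
    (succPoly p n w bs).degree = (p ^ 6 : ℕ) := by
  have h1 : (1 : ℕ) < p ^ 6 := Nat.one_lt_pow (by norm_num) hp.out.one_lt
  have hX : (X ^ p ^ 6 : Polynomial k).degree = ((p ^ 6 : ℕ) : WithBot ℕ) := by
    simp [degree_pow]
  have h2 : (X ^ p ^ 6 - X * C (w.coeff 0 ^ p ^ (n + 1)) : Polynomial k).degree
      = ((p ^ 6 : ℕ) : WithBot ℕ) := by
    rw [degree_sub_eq_left_of_degree_lt, hX]
    rw [hX]
    refine lt_of_le_of_lt (degree_mul_le _ _) ?_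
    refine lt_of_le_of_lt (add_le_add degree_X_le degree_C_le) ?_
    rw [add_zero]
    exact_mod_cast h1
  rw [succPoly, degree_sub_eq_left_of_degree_lt, h2]
  rw [h2]
  refine lt_of_le_of_lt degree_C_le ?_
  exact_mod_cast Nat.lt_of_lt_of_le Nat.one_pos h1.le

theorem succRoot_exists (n : ℕ) (w : 𝕎 k) (bs : Fin (n + 1) → k) :
    ∃ x : k, (succPoly p n w bs).IsRoot x :=
  IsAlgClosed.exists_root _ <| by
    rw [succPoly_degree]
    exact_mod_cast (pow_ne_zero 6 hp.out.ne_zero)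

/-- successor coefficient -/
def succVal (n : ℕ) (w : 𝕎 k) (bs : Fin (n + 1) → k) : k :=
  Classical.choose (succRoot_exists p n w bs)

theorem succVal_spec (n : ℕ) (w : 𝕎 k) (bs : Fin (n + 1) → k) :
    succVal p n w bs ^ p ^ 6 =
      w.coeff (n + 1) * bs 0 ^ p ^ (n + 1) +
        succVal p n w bs * w.coeff 0 ^ p ^ (n + 1) +
        nthRemainder p n (truncateFun (n + 1) w) bs := by
  have := Classical.choose_spec (succRoot_exists p n w bs)
  rw [Polynomial.IsRoot.def] at this
  simp only [succPoly, eval_sub, eval_pow, eval_X, eval_mul, eval_C, eval_add] at this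
  rw [show succVal p n w bs = Classical.choose (succRoot_exists p n w bs) from rfl]
  simp only [succPoly]
  linear_combination this

/-- the coefficients of the solution vector -/
def langCoeff (w : 𝕎 k) : ℕ → k
  | 0 => sol0 p w
  | n + 1 => succVal p n w (fun i => langCoeff w i.val)

theorem lang_main {w : 𝕎 k} (hw : w.coeff 0 ≠ 0) :
    ∃ v : 𝕎 k, v.coeff 0 ≠ 0 ∧
      (⇑(WittVector.frobenius : 𝕎 k →+* 𝕎 k))^[6] v = w * v := by
  have hmk : ∀ n, (WittVector.mk p (langCoeff p w)).coeff n = langCoeff p w n :=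
    fun n => rfl
  refine ⟨WittVector.mk p (langCoeff p w), ?_, ?_⟩
  · rw [hmk, langCoeff]
    exact sol0_ne_zero p hw
  · ext n
    rw [coeff_frobenius_iterate, hmk]
    cases n with
    | zero =>
        rw [WittVector.mul_coeff_zero, hmk]
        simp only [langCoeff]
        exact sol0_spec' p hw
    | succ n =>
        rw [nthRemainder_spec]
        have htr : truncateFun (n + 1) (WittVector.mk p (langCoeff p w))
            = fun i : Fin (n + 1) => langCoeff p w i.val := by
          funext i
          exact hmk i
        rw [hmk, hmk, htr]
        have h := succVal_spec p n w (fun i : Fin (n + 1) => langCoeff p w i.val)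
        simp only [langCoeff, Fin.val_zero] at h ⊢
        exact h

end WittSixLang

end

/-- Let `k` be an algebraically closed field of characteristic `p` and let
`σ` be the Frobenius endomorphism of the Witt vectors `W(k)`.  Then for every
unit `w ∈ W(k)ˣ` there is a unit `v ∈ W(k)ˣ` with `σ⁶(v) = w·v`. -/
theorem witt_frobenius_six_lang (p : ℕ) [Fact p.Prime] (k : Type*) [Field k]
    [IsAlgClosed k] [CharP k p] (w : (WittVector p k)ˣ) :
    ∃ v : (WittVector p k)ˣ,
      (⇑(WittVector.frobenius : WittVector p k →+* WittVector p k))^[6] (v : WittVector p k) =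
        (w : WittVector p k) * (v : WittVector p k) := by
  have hw : (w : WittVector p k).coeff 0 ≠ 0 := by
    intro h
    have := congrArg (fun x : WittVector p k => x.coeff 0) w.mul_inv
    rw [WittVector.mul_coeff_zero, WittVector.one_coeff_zero, h, zero_mul] at this
    exact zero_ne_one this
  obtain ⟨v, hv0, hv⟩ := WittSixLang.lang_main p hw
  obtain ⟨u, hu⟩ := WittVector.isUnit_of_coeff_zero_ne_zero v hv0
  exact ⟨u, by rw [hu]; exact hv⟩
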